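/- Let p, q, r, m be natural numbers with m ≥ 1, let n = p + q + r, and let ε be a real number with 0 < ε < 1/2. The number of predicates T : B^p × B^q × B^r → Bool for which there exists a predicate T' of decomposition complexity at most m agreeing with T on at least (1−ε)·2^n input triples is at most m · 2^(m·2^(p+q) + m·2^(q+r) + 2^m) · (∑_{i=0}^{⌊ε·2^n⌋} C(2^n, i)), where C(N,i) denotes the binomial coefficient. -/

import Mathlib

/-- `BS k` is the set of binary strings of length `k`. -/
abbrev BS (k : ℕ) := Fin k → Bool

/-- The decomposition complexity of `T : B^p × B^q × B^r → M` is at most `n`. -/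
def DecompBound {p q r : ℕ} {M : Type*} (T : BS p → BS q → BS r → M) (n : ℕ) : Prop :=
  ∃ u v : ℕ, u + v ≤ n ∧
    ∃ (a : BS p → BS q → BS u) (b : BS q → BS r → BS v) (t : BS u → BS v → M),
      ∀ x y z, T x y z = t (a x y) (b y z)

/-- Witness data for a predicate of decomposition complexity at most `m` (with
`u + v = s + 1 ∈ {1, …, m}`). -/
abbrev Wit (p q r m : ℕ) : Type :=
  Σ s : Fin m, Σ u : Fin (s.1 + 2),
    ((BS p → BS q → BS u.1) × (BS q → BS r → BS (s.1 + 1 - u.1)) ×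
      (BS u.1 → BS (s.1 + 1 - u.1) → Bool))

set_option synthInstance.maxSize 400 in
instance witFintype (p q r m : ℕ) : Fintype (Wit p q r m) := inferInstance

/-- Decoding witness data into a predicate. -/
def wdecode {p q r m : ℕ} (w : Wit p q r m) : BS p → BS q → BS r → Bool :=
  fun x y z => w.2.2.2.2 (w.2.2.1 x y) (w.2.2.2.1 y z)

lemma wdecode_surj {p q r m : ℕ} (hm : 1 ≤ m) (T' : BS p → BS q → BS r → Bool)
    (h : DecompBound T' m) : ∃ w : Wit p q r m, wdecode w = T' := by
  obtain ⟨u, v, huv, a, b, t, hT⟩ := h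
  rcases Nat.eq_zero_or_pos (u + v) with h0 | h1
  · obtain ⟨hu, hv⟩ : u = 0 ∧ v = 0 := by omega
    subst hu; subst hv
    refine ⟨⟨⟨0, hm⟩, ⟨0, by omega⟩, a, fun _ _ => (fun _ => false),
      fun w _ => t w (fun i => i.elim0)⟩, ?_⟩
    funext x y z
    rw [wdecode, hT x y z]
    exact congrArg (t (a x y)) (Subsingleton.elim (α := BS 0) _ _)
  · have hs : u + v - 1 < m := by omega
    have hu : u < (u + v - 1) + 2 := by omega
    have hvv : (u + v - 1) + 1 - u = v := by omega
    refine ⟨⟨⟨u + v - 1, hs⟩, ⟨u, hu⟩, a,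
      fun y z => cast (congrArg BS hvv.symm) (b y z),
      fun w1 w2 => t w1 (cast (congrArg BS hvv) w2)⟩, ?_⟩
    funext x y z
    rw [wdecode, hT x y z]
    dsimp only
    rw [cast_cast, cast_eq]

lemma card_bs_fun (a b c : ℕ) : Fintype.card (BS a → BS b → BS c) = 2 ^ (c * 2 ^ (a + b)) := by
  simp [Fintype.card_fun, Fintype.card_fin]
  rw [← pow_mul, ← pow_mul, pow_add]
  ring_nf

lemma card_t_fun (u v : ℕ) : Fintype.card (BS u → BS v → Bool) = 2 ^ (2 ^ (u + v)) := by
  simp [Fintype.card_fun, Fintype.card_fin]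
  rw [pow_add]
  ring_nf

set_option synthInstance.maxSize 400 in
lemma card_wit_eq (p q r m : ℕ) :
    Fintype.card (Wit p q r m) =
      ∑ s : Fin m, ∑ u : Fin (s.1 + 2),
        2 ^ (u.1 * 2 ^ (p + q)) *
          (2 ^ ((s.1 + 1 - u.1) * 2 ^ (q + r)) * 2 ^ (2 ^ (u.1 + (s.1 + 1 - u.1)))) := by
  rw [Fintype.card_sigma]
  congr 1; funext s
  rw [Fintype.card_sigma]
  congr 1; funext u
  rw [Fintype.card_prod, Fintype.card_prod, card_bs_fun, card_bs_fun, card_t_fun]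

lemma card_wit_le (p q r m : ℕ) :
    Fintype.card (Wit p q r m) ≤ m * 2 ^ (m * 2 ^ (p + q) + m * 2 ^ (q + r) + 2 ^ m) := by
  rw [card_wit_eq]
  set A := 2 ^ (p + q) with hA'
  set B := 2 ^ (q + r) with hB'
  have hA : 1 ≤ A := Nat.one_le_two_pow
  have hB : 1 ≤ B := Nat.one_le_two_pow
  have inner : ∀ s : Fin m,
      (∑ u : Fin (s.1 + 2), 2 ^ (u.1 * A) *
        (2 ^ ((s.1 + 1 - u.1) * B) * 2 ^ (2 ^ (u.1 + (s.1 + 1 - u.1))))) ≤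
      2 ^ (m * A + m * B + 2 ^ m) := by
    rintro ⟨n, hn⟩
    dsimp only
    have hle : n + 1 ≤ (n + 1) * A + (n + 1) * B :=
      le_trans (Nat.le_mul_of_pos_right _ (by omega)) (Nat.le_add_right _ _)
    set D := (n + 1) * A + (n + 1) * B - (n + 1) with hD'
    have hD : (n + 1) + D = (n + 1) * A + (n + 1) * B := Nat.add_sub_cancel' hle
    have hterm : ∀ u : Fin (n + 2),
        2 ^ (u.1 * A) * (2 ^ ((n + 1 - u.1) * B) * 2 ^ (2 ^ (u.1 + (n + 1 - u.1)))) ≤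
        2 ^ (D + 2 ^ (n + 1)) := by
      rintro ⟨u, hu⟩
      dsimp only
      rw [← pow_add, ← pow_add]
      apply Nat.pow_le_pow_right (by norm_num)
      have h2 : u + (n + 1 - u) = n + 1 := by omega
      rw [h2]
      have hprod : u * A + (n + 1 - u) * B + (n + 1) ≤ (n + 1) * A + (n + 1) * B := by
        have e1 : (n + 1) * A = u * A + (n + 1 - u) * A := by
          rw [← Nat.add_mul]; congr 1; omega
        have e2 : (n + 1) * B = u * B + (n + 1 - u) * B := by
          rw [← Nat.add_mul]; congr 1; omega
        have e3 : n + 1 - u ≤ (n + 1 - u) * A := Nat.le_mul_of_pos_right _ hA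
        have e4 : u ≤ u * B := Nat.le_mul_of_pos_right _ hB
        have key : u + (n + 1 - u) ≤ (n + 1 - u) * A + u * B := by
          have := Nat.add_le_add e3 e4; linarith
        rw [e1, e2]
        linarith [key, h2]
      have hsub := Nat.le_sub_of_add_le hprod
      rw [← hD'] at hsub
      linarith
    calc (∑ u : Fin (n + 2),
          2 ^ (u.1 * A) * (2 ^ ((n + 1 - u.1) * B) * 2 ^ (2 ^ (u.1 + (n + 1 - u.1)))))
        ≤ (n + 2) * 2 ^ (D + 2 ^ (n + 1)) := by
          have := Finset.sum_le_card_nsmul Finset.univ _ _ (fun u _ => hterm u)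
          simpa using this
      _ ≤ 2 ^ (n + 1) * 2 ^ (D + 2 ^ (n + 1)) := by
          have : n + 2 ≤ 2 ^ (n + 1) := (Nat.lt_two_pow_self (n := n + 1))
          exact Nat.mul_le_mul_right _ this
      _ = 2 ^ ((n + 1) * A + (n + 1) * B + 2 ^ (n + 1)) := by
          rw [← pow_add]; congr 1; omega
      _ ≤ 2 ^ (m * A + m * B + 2 ^ m) := by
          apply Nat.pow_le_pow_right (by norm_num)
          have h1 : n + 1 ≤ m := hn
          have := Nat.pow_le_pow_right (show 1 ≤ 2 by norm_num) h1
          have hA2 : (n + 1) * A ≤ m * A := Nat.mul_le_mul_right _ h1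
          have hB2 : (n + 1) * B ≤ m * B := Nat.mul_le_mul_right _ h1
          omega
  calc (∑ s : Fin m, ∑ u : Fin (s.1 + 2), 2 ^ (u.1 * A) *
        (2 ^ ((s.1 + 1 - u.1) * B) * 2 ^ (2 ^ (u.1 + (s.1 + 1 - u.1)))))
      ≤ m * 2 ^ (m * A + m * B + 2 ^ m) := by
        have := Finset.sum_le_card_nsmul Finset.univ _ _ (fun s _ => inner s)
        simpa using this

lemma card_small_sets {Ω : Type*} [Fintype Ω] [DecidableEq Ω] (K : ℕ) :
    Fintype.card {S : Finset Ω // S.card ≤ K} =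
      ∑ i ∈ Finset.range (K + 1), (Fintype.card Ω).choose i := by
  rw [Fintype.card_subtype]
  have h : (Finset.univ.filter fun S : Finset Ω => S.card ≤ K) =
      (Finset.range (K + 1)).biUnion fun i => Finset.powersetCard i Finset.univ := by
    ext S
    simp [Finset.mem_powersetCard_univ, Nat.lt_succ_iff]
  rw [h, Finset.card_biUnion]
  · refine Finset.sum_congr rfl fun i _ => ?_
    rw [Finset.card_powersetCard, Finset.card_univ]
  · intro i _ j _ hij
    refine Finset.disjoint_left.2 fun S hS hS' => hij ?_
    rw [Finset.mem_powersetCard_univ] at hS hS'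
    omega

lemma card_bs_triple (p q r : ℕ) :
    Fintype.card (BS p × BS q × BS r) = 2 ^ (p + q + r) := by
  simp [Fintype.card_fun]
  rw [pow_add, pow_add]
  ring

/-- The number of predicates `T : B^p × B^q × B^r → Bool` that are ε-approximated by
some predicate of decomposition complexity at most `m` (i.e. agree with it on at
least `(1-ε)·2^n` of the `2^n` input triples, `n = p + q + r`) is at most
`m · 2^(m·2^(p+q) + m·2^(q+r) + 2^m) · ∑_{i=0}^{⌊ε·2^n⌋} C(2^n, i)`. -/
theorem count_approximable_predicates (p q r m : ℕ) (hm : 1 ≤ m)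
    (ε : ℝ) (hε0 : 0 < ε) (hε : ε < 1 / 2) :
    Nat.card {T : BS p → BS q → BS r → Bool //
        ∃ T' : BS p → BS q → BS r → Bool, DecompBound T' m ∧
          (1 - ε) * 2 ^ (p + q + r) ≤
            ((Finset.univ.filter (fun w : BS p × BS q × BS r =>
                T w.1 w.2.1 w.2.2 = T' w.1 w.2.1 w.2.2)).card : ℝ)} ≤
      m * 2 ^ (m * 2 ^ (p + q) + m * 2 ^ (q + r) + 2 ^ m) *
        ∑ i ∈ Finset.range (⌊ε * 2 ^ (p + q + r)⌋₊ + 1), Nat.choose (2 ^ (p + q + r)) i := by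
  classical
  set K := ⌊ε * 2 ^ (p + q + r)⌋₊ with hKdef
  set Q : (BS p → BS q → BS r → Bool) → Prop := fun T =>
    ∃ T' : BS p → BS q → BS r → Bool, DecompBound T' m ∧
      (1 - ε) * 2 ^ (p + q + r) ≤
        ((Finset.univ.filter (fun w : BS p × BS q × BS r =>
            T w.1 w.2.1 w.2.2 = T' w.1 w.2.1 w.2.2)).card : ℝ) with hQ
  let Tp : {T // Q T} → (BS p → BS q → BS r → Bool) := fun T => (T.2).choose
  have hTp1 : ∀ T, DecompBound (Tp T) m := fun T => (T.2).choose_spec.1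
  have hTp2 : ∀ T : {T // Q T}, (1 - ε) * 2 ^ (p + q + r) ≤
      ((Finset.univ.filter (fun w : BS p × BS q × BS r =>
          T.1 w.1 w.2.1 w.2.2 = Tp T w.1 w.2.1 w.2.2)).card : ℝ) :=
    fun T => (T.2).choose_spec.2
  let wf : {T // Q T} → Wit p q r m := fun T => (wdecode_surj hm _ (hTp1 T)).choose
  have hwf : ∀ T, wdecode (wf T) = Tp T := fun T => (wdecode_surj hm _ (hTp1 T)).choose_spec
  let Sf : {T // Q T} → Finset (BS p × BS q × BS r) := fun T =>
    Finset.univ.filter fun w => ¬ (T.1 w.1 w.2.1 w.2.2 = Tp T w.1 w.2.1 w.2.2)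
  have hSf : ∀ T, (Sf T).card ≤ K := by
    intro T
    have hadd := Finset.card_filter_add_card_filter_not (s := Finset.univ)
      (p := fun w : BS p × BS q × BS r => T.1 w.1 w.2.1 w.2.2 = Tp T w.1 w.2.1 w.2.2)
    rw [Finset.card_univ, card_bs_triple] at hadd
    have h2 := hTp2 T
    apply Nat.le_floor
    have hcast := congrArg (Nat.cast : ℕ → ℝ) hadd
    push_cast at hcast
    have : ((Sf T).card : ℝ) =
        ((Finset.univ.filter fun w : BS p × BS q × BS r =>
          ¬ (T.1 w.1 w.2.1 w.2.2 = Tp T w.1 w.2.1 w.2.2)).card : ℝ) := rfl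
    rw [this]
    linarith
  have hrecover : ∀ T : {T // Q T}, ∀ x y z,
      T.1 x y z = (if (x, y, z) ∈ Sf T then !(Tp T x y z) else Tp T x y z) := by
    intro T x y z
    have hmem : ((x, y, z) ∈ Sf T) ↔ ¬ (T.1 x y z = Tp T x y z) := by
      simp [Sf]
    by_cases h : T.1 x y z = Tp T x y z
    · rw [if_neg (fun hc => (hmem.1 hc) h), h]
    · rw [if_pos (hmem.2 h)]
      cases hb : T.1 x y z <;> cases hb' : Tp T x y z <;> simp_all
  let f : {T // Q T} → Wit p q r m × {S : Finset (BS p × BS q × BS r) // S.card ≤ K} :=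
    fun T => (wf T, ⟨Sf T, hSf T⟩)
  have hinj : Function.Injective f := by
    intro T1 T2 h
    have h1 : wf T1 = wf T2 := congrArg Prod.fst h
    have h2 : Sf T1 = Sf T2 := congrArg (fun x : _ × {S : Finset (BS p × BS q × BS r) // S.card ≤ K} => (x.2 : Finset (BS p × BS q × BS r))) h
    have hTpeq : Tp T1 = Tp T2 := by rw [← hwf, ← hwf, h1]
    apply Subtype.ext
    funext x y z
    rw [hrecover T1 x y z, hrecover T2 x y z, h2, hTpeq]
  have hcount := Nat.card_le_card_of_injective f hinj
  rw [Nat.card_eq_fintype_card (α := Wit p q r m × {S : Finset (BS p × BS q × BS r) // S.card ≤ K}),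
    Fintype.card_prod] at hcount
  refine hcount.trans ?_
  have hss : Fintype.card {S : Finset (BS p × BS q × BS r) // S.card ≤ K} =
      ∑ i ∈ Finset.range (K + 1), Nat.choose (2 ^ (p + q + r)) i := by
    rw [card_small_sets, card_bs_triple]
  rw [hss]
  exact Nat.mul_le_mul_right _ (card_wit_le p q r m)
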